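/- With the bracket ⟨·⟩ and Z_i as above, for any nonempty sequence α = (α_1,...,α_m) of nonnegative integers with α_i > 0 for i > 1, the series F_{α_1,...,α_m} = ⟨exp(-Z_1) · Z_{α_1} ··· Z_{α_m}⟩ ∈ ℚ[[x]] is a polynomial in x of degree at most 1 + Σ_{i=1}^m α_i. -/

import Mathlib

open PowerSeries Finset

/-- The value of the bracket on a monomial `∏ t_j ^ (m j)`: it is `1` on the constant
monomial, and `(d₁+⋯+d_k)^(k-3)` on `t_{d₁}⋯t_{d_k}`, where `k` is the number of factors
(with multiplicity) and the `d_i` are the variable indices. -/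
noncomputable def brval (m : ℕ →₀ ℕ) : ℚ :=
  if m = 0 then 1
  else (((m.sum fun j e => j * e : ℕ) : ℚ)) ^ (((m.sum fun _ e => e : ℕ) : ℤ) - 3)

/-- The bracket `⟨·⟩ : ℚ[t₁,t₂,…] → ℚ`, the linear functional with `⟨1⟩ = 1` and
`⟨t_{d₁}⋯t_{d_k}⟩ = (d₁+⋯+d_k)^(k-3)`. -/
noncomputable def bracket (f : MvPolynomial ℕ ℚ) : ℚ :=
  ∑ m ∈ f.support, f.coeff m * brval m

/-- `Z_i(t,x) = ∑_{j ≥ 1} x^j t_j j^{j-i} / j!` as a power series in `x` with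
coefficients in `ℚ[t]`. -/
noncomputable def Zser (i : ℕ) : PowerSeries (MvPolynomial ℕ ℚ) :=
  PowerSeries.mk fun j =>
    if j = 0 then 0
    else MvPolynomial.C (((j : ℚ) ^ ((j : ℤ) - (i : ℤ))) / (Nat.factorial j : ℚ)) *
      MvPolynomial.X j

/-- `exp(-Z) = ∑_k (-Z)^k / k!`, computed coefficientwise (well defined for `Z` with
vanishing constant term, since then `(Z^k)`'s `n`-th coefficient vanishes for `k > n`). -/
noncomputable def expNeg (Z : PowerSeries (MvPolynomial ℕ ℚ)) :
    PowerSeries (MvPolynomial ℕ ℚ) :=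
  PowerSeries.mk fun n => ∑ k ∈ Finset.range (n + 1),
    MvPolynomial.C ((-1 : ℚ) ^ k / (Nat.factorial k : ℚ)) * PowerSeries.coeff n (Z ^ k)

/-- The `x`-linear extension of the bracket to `ℚ[t][[x]] → ℚ[[x]]`. -/
noncomputable def bracketSeries (F : PowerSeries (MvPolynomial ℕ ℚ)) : PowerSeries ℚ :=
  PowerSeries.mk fun n => bracket (PowerSeries.coeff n F)

noncomputable def Eexp (a : ℚ) : PowerSeries ℚ :=
  PowerSeries.mk fun p => a ^ p / (Nat.factorial p : ℚ)

@[simp] lemma coeff_Eexp (a : ℚ) (p : ℕ) :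
    PowerSeries.coeff p (Eexp a) = a ^ p / (Nat.factorial p : ℚ) :=
  PowerSeries.coeff_mk _ _

lemma Eexp_mul_Eexp (a b : ℚ) : Eexp a * Eexp b = Eexp (a + b) := by
  ext p
  rw [PowerSeries.coeff_mul, coeff_Eexp, add_pow, Finset.sum_div]
  rw [Finset.Nat.sum_antidiagonal_eq_sum_range_succ_mk]
  refine Finset.sum_congr rfl fun i hi => ?_
  simp only [coeff_Eexp]
  rw [Nat.cast_choose ℚ (Finset.mem_range_succ_iff.mp hi)]
  have h1 : (Nat.factorial i : ℚ) ≠ 0 := Nat.cast_ne_zero.mpr (Nat.factorial_ne_zero i)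
  have h2 : (Nat.factorial (p - i) : ℚ) ≠ 0 := Nat.cast_ne_zero.mpr (Nat.factorial_ne_zero _)
  have h3 : (Nat.factorial p : ℚ) ≠ 0 := Nat.cast_ne_zero.mpr (Nat.factorial_ne_zero p)
  field_simp

lemma Eexp_zero : Eexp 0 = 1 := by
  ext p
  rw [coeff_Eexp, PowerSeries.coeff_one]
  cases p with
  | zero => simp
  | succ q => simp [zero_pow]

lemma Eexp_pow (a : ℚ) (l : ℕ) : (Eexp a) ^ l = Eexp (l * a) := by
  induction l with
  | zero => simp [Eexp_zero]
  | succ k ih =>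
      rw [pow_succ, ih, Eexp_mul_Eexp]
      push_cast; ring_nf

noncomputable def gser : PowerSeries ℚ := PowerSeries.X * Eexp (-1)

lemma gser_pow (l : ℕ) : gser ^ l = PowerSeries.X ^ l * Eexp (-(l : ℚ)) := by
  rw [gser, mul_pow, Eexp_pow]; ring_nf

lemma coeff_gser_pow (l p : ℕ) :
    PowerSeries.coeff p (gser ^ l) =
      if l ≤ p then (-(l : ℚ)) ^ (p - l) / (Nat.factorial (p - l) : ℚ) else 0 := by
  rw [gser_pow]
  split_ifs with h
  · obtain ⟨d, rfl⟩ := Nat.exists_eq_add_of_le h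
    rw [add_comm l d, PowerSeries.coeff_X_pow_mul, coeff_Eexp, Nat.add_sub_cancel]
  · rw [PowerSeries.coeff_mul]
    refine Finset.sum_eq_zero fun x hx => ?_
    rw [PowerSeries.coeff_X_pow, if_neg, zero_mul]
    rintro rfl
    have := Finset.HasAntidiagonal.mem_antidiagonal.mp hx
    omega

lemma coeff_gser_pow_eq_zero {l p : ℕ} (h : p < l) :
    PowerSeries.coeff p (gser ^ l) = 0 := by
  rw [coeff_gser_pow, if_neg (not_le.mpr h)]

lemma coeff_aeval_gser_mul (Q : Polynomial ℚ) (B : PowerSeries ℚ) (p : ℕ) :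
    PowerSeries.coeff p (Polynomial.aeval gser Q * B) =
      ∑ k ∈ range (p + 1), Q.coeff k * PowerSeries.coeff p (gser ^ k * B) := by
  have hzero : ∀ k, p < k → PowerSeries.coeff p (gser ^ k * B) = 0 := by
    intro k hk
    rw [PowerSeries.coeff_mul]
    refine Finset.sum_eq_zero fun x hx => ?_
    have hx' := Finset.HasAntidiagonal.mem_antidiagonal.mp hx
    rw [coeff_gser_pow_eq_zero (by omega), zero_mul]
  have haev : Polynomial.aeval gser Q = ∑ k ∈ Q.support, PowerSeries.C (Q.coeff k) * gser ^ k := by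
    rw [Polynomial.aeval_def, Polynomial.eval₂_eq_sum, Polynomial.sum]
    refine Finset.sum_congr rfl fun k _ => ?_
    congr 1
  rw [haev, Finset.sum_mul]
  simp_rw [mul_assoc, map_sum, PowerSeries.coeff_C_mul]
  have eq1 : ∑ k ∈ Q.support ∩ range (p+1), Q.coeff k * PowerSeries.coeff p (gser ^ k * B)
      = ∑ k ∈ Q.support, Q.coeff k * PowerSeries.coeff p (gser ^ k * B) := by
    refine Finset.sum_subset Finset.inter_subset_left fun x hx hx' => ?_
    have hxp : p < x := by
      by_contra hc
      exact hx' (Finset.mem_inter.mpr ⟨hx, Finset.mem_range.mpr (by omega)⟩)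
    rw [hzero x hxp, mul_zero]
  have eq2 : ∑ k ∈ Q.support ∩ range (p+1), Q.coeff k * PowerSeries.coeff p (gser ^ k * B)
      = ∑ k ∈ range (p+1), Q.coeff k * PowerSeries.coeff p (gser ^ k * B) := by
    refine Finset.sum_subset Finset.inter_subset_right fun x hx hx' => ?_
    have : x ∉ Q.support := fun hs => hx' (Finset.mem_inter.mpr ⟨hs, hx⟩)
    rw [Polynomial.notMem_support_iff.mp this, zero_mul]
  rw [← eq1, eq2]

lemma coeff_aeval_gser (Q : Polynomial ℚ) (p : ℕ) :
    PowerSeries.coeff p (Polynomial.aeval gser Q) =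
      ∑ k ∈ range (p + 1), Q.coeff k * PowerSeries.coeff p (gser ^ k) := by
  simpa using coeff_aeval_gser_mul Q 1 p

noncomputable def Cg (H : PowerSeries ℚ) : PowerSeries ℚ :=
  PowerSeries.mk fun p => PowerSeries.coeff p (Polynomial.aeval gser (trunc (p + 1) H))

lemma coeff_Cg (H : PowerSeries ℚ) (p : ℕ) :
    PowerSeries.coeff p (Cg H) =
      ∑ k ∈ range (p + 1), PowerSeries.coeff k H * PowerSeries.coeff p (gser ^ k) := by
  rw [Cg, PowerSeries.coeff_mk, coeff_aeval_gser]
  refine Finset.sum_congr rfl fun k hk => ?_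
  rw [PowerSeries.coeff_trunc, if_pos (Finset.mem_range.mp hk)]

lemma coeff_Cg_eq_trunc (H : PowerSeries ℚ) {u N : ℕ} (h : u < N) :
    PowerSeries.coeff u (Cg H) =
      PowerSeries.coeff u (Polynomial.aeval gser (trunc N H)) := by
  rw [coeff_Cg, coeff_aeval_gser]
  refine Finset.sum_congr rfl fun k hk => ?_
  rw [PowerSeries.coeff_trunc, if_pos (by have := Finset.mem_range.mp hk; omega)]

lemma Cg_mul (F G : PowerSeries ℚ) : Cg (F * G) = Cg F * Cg G := by
  ext p
  have h1 : PowerSeries.coeff p (Cg F * Cg G) =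
      PowerSeries.coeff p (Polynomial.aeval gser (trunc (p+1) F) *
        Polynomial.aeval gser (trunc (p+1) G)) := by
    rw [PowerSeries.coeff_mul, PowerSeries.coeff_mul]
    refine Finset.sum_congr rfl fun x hx => ?_
    have hx' := Finset.HasAntidiagonal.mem_antidiagonal.mp hx
    rw [coeff_Cg_eq_trunc F (N := p+1) (by omega), coeff_Cg_eq_trunc G (N := p+1) (by omega)]
  rw [h1, ← map_mul, coeff_Cg, coeff_aeval_gser]
  refine Finset.sum_congr rfl fun k hk => ?_
  have hk' := Finset.mem_range.mp hk
  congr 1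
  rw [Polynomial.coeff_mul, PowerSeries.coeff_mul]
  refine Finset.sum_congr rfl fun x hx => ?_
  have hx' := Finset.HasAntidiagonal.mem_antidiagonal.mp hx
  rw [PowerSeries.coeff_trunc, PowerSeries.coeff_trunc, if_pos (by omega), if_pos (by omega)]

lemma Cg_one : Cg 1 = 1 := by
  ext p
  rw [coeff_Cg]
  rw [Finset.sum_eq_single 0]
  · simp [PowerSeries.coeff_one]
  · intro k _ hk
    rw [PowerSeries.coeff_one, if_neg hk, zero_mul]
  · intro h
    exact absurd (Finset.mem_range.mpr (Nat.succ_pos p)) h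

lemma Cg_pow (F : PowerSeries ℚ) (k : ℕ) : Cg (F ^ k) = (Cg F) ^ k := by
  induction k with
  | zero => simpa using Cg_one
  | succ j ih => rw [pow_succ, pow_succ, Cg_mul, ih]

lemma Cg_prod {ι : Type*} (s : Finset ι) (f : ι → PowerSeries ℚ) :
    Cg (∏ i ∈ s, f i) = ∏ i ∈ s, Cg (f i) := by
  classical
  induction s using Finset.cons_induction with
  | empty => simpa using Cg_one
  | cons a s ha ih => rw [Finset.prod_cons, Finset.prod_cons, Cg_mul, ih]

lemma coeff_one_sub_X_mul (F : PowerSeries ℚ) (p : ℕ) :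
    PowerSeries.coeff p ((1 - PowerSeries.X) * F) =
      PowerSeries.coeff p F - (if p = 0 then 0 else PowerSeries.coeff (p-1) F) := by
  rw [sub_mul, one_mul, map_sub]
  congr 1
  cases p with
  | zero => simp [PowerSeries.coeff_zero_eq_constantCoeff]
  | succ q => simp [PowerSeries.coeff_succ_X_mul]

lemma coeff_one_sub_X_mul_Eexp_self (c : ℕ) :
    PowerSeries.coeff c ((1 - PowerSeries.X) * Eexp c) = if c = 0 then 1 else 0 := by
  rw [coeff_one_sub_X_mul]
  cases c with
  | zero => simp
  | succ d =>
      simp only [coeff_Eexp, Nat.succ_ne_zero, if_false, Nat.add_sub_cancel]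
      rw [Nat.factorial_succ, pow_succ]
      have h1 : (Nat.factorial d : ℚ) ≠ 0 := Nat.cast_ne_zero.mpr (Nat.factorial_ne_zero d)
      have h2 : ((d:ℚ) + 1) ≠ 0 := by positivity
      push_cast
      field_simp
      ring

lemma coeff_gser_pow_mul_B {k n : ℕ} (hk : k ≤ n) :
    PowerSeries.coeff n (gser ^ k * ((1 - PowerSeries.X) * Eexp n)) =
      if k = n then 1 else 0 := by
  obtain ⟨c, rfl⟩ := Nat.exists_eq_add_of_le hk
  have : gser ^ k * ((1 - PowerSeries.X) * Eexp (k + c : ℕ)) =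
      PowerSeries.X ^ k * ((1 - PowerSeries.X) * Eexp c) := by
    rw [gser_pow]
    have : Eexp (-(k:ℚ)) * Eexp ((k + c : ℕ) : ℚ) = Eexp c := by
      rw [Eexp_mul_Eexp]; push_cast; ring_nf
    calc PowerSeries.X ^ k * Eexp (-(k:ℚ)) * ((1 - PowerSeries.X) * Eexp (k + c : ℕ))
        = PowerSeries.X ^ k * ((1 - PowerSeries.X) * (Eexp (-(k:ℚ)) * Eexp ((k + c : ℕ) : ℚ))) := by
          ring
      _ = PowerSeries.X ^ k * ((1 - PowerSeries.X) * Eexp c) := by rw [this]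
  rw [this]
  have hnc : k + c = c + k := by omega
  rw [hnc, PowerSeries.coeff_X_pow_mul, coeff_one_sub_X_mul_Eexp_self]
  congr 1
  simp only [eq_iff_iff]
  omega

lemma mainL (H : PowerSeries ℚ) (n : ℕ) :
    PowerSeries.coeff n H =
      PowerSeries.coeff n (Cg H * ((1 - PowerSeries.X) * Eexp n)) := by
  have h1 : PowerSeries.coeff n (Cg H * ((1 - PowerSeries.X) * Eexp n)) =
      PowerSeries.coeff n (Polynomial.aeval gser (trunc (n+1) H) *
        ((1 - PowerSeries.X) * Eexp n)) := by
    rw [PowerSeries.coeff_mul, PowerSeries.coeff_mul]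
    refine Finset.sum_congr rfl fun x hx => ?_
    have hx' := Finset.HasAntidiagonal.mem_antidiagonal.mp hx
    rw [coeff_Cg_eq_trunc H (N := n+1) (by omega)]
  rw [h1, coeff_aeval_gser_mul]
  rw [Finset.sum_eq_single n]
  · rw [coeff_gser_pow_mul_B le_rfl, if_pos rfl, mul_one, PowerSeries.coeff_trunc,
      if_pos (Nat.lt_succ_self n)]
  · intro k hk hkn
    rw [coeff_gser_pow_mul_B (by have := Finset.mem_range.mp hk; omega), if_neg hkn, mul_zero]
  · intro h
    exact absurd (Finset.mem_range.mpr (Nat.lt_succ_self n)) h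

noncomputable def Dsum (p d : ℕ) : ℚ :=
  ∑ l ∈ range (p + 1), (-1 : ℚ) ^ l * (p.choose l : ℚ) * (l : ℚ) ^ d

lemma Dsum_succ_succ (p d : ℕ) :
    Dsum (p+1) (d+1) =
      -((p:ℚ)+1) * ∑ e ∈ range (d+1), (d.choose e : ℚ) * Dsum p e := by
  rw [Dsum, Finset.sum_range_succ']
  have h0 : (-1 : ℚ) ^ 0 * ((p+1).choose 0 : ℚ) * ((0:ℕ) : ℚ) ^ (d+1) = 0 := by
    simp
  rw [h0, add_zero]
  have hterm : ∀ l : ℕ, (-1:ℚ)^(l+1) * (((p+1).choose (l+1) : ℕ) : ℚ) * ((l+1 : ℕ) : ℚ)^(d+1)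
      = -((p:ℚ)+1) * ((p.choose l : ℚ) * ((-1:ℚ)^l * ((l:ℚ)+1)^d)) := by
    intro l
    have hc : (((p+1).choose (l+1) : ℕ) : ℚ) * ((l:ℚ)+1) = ((p:ℚ)+1) * (p.choose l : ℚ) := by
      have := Nat.add_one_mul_choose_eq p l
      have hq : (((p+1) * p.choose l : ℕ) : ℚ) = (((p+1).choose (l+1) * (l+1) : ℕ) : ℚ) := by
        exact_mod_cast congrArg (Nat.cast : ℕ → ℚ) this
      push_cast at hq
      linarith [hq]
    have hp : ((l+1 : ℕ) : ℚ)^(d+1) = ((l:ℚ)+1)^d * ((l:ℚ)+1) := by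
      push_cast
      rw [pow_succ]
    rw [hp, pow_succ]
    calc (-1:ℚ)^l * (-1) * (((p+1).choose (l+1) : ℕ) : ℚ) * (((l:ℚ)+1)^d * ((l:ℚ)+1))
        = -((-1:ℚ)^l * ((l:ℚ)+1)^d) * ((((p+1).choose (l+1) : ℕ) : ℚ) * ((l:ℚ)+1)) := by ring
      _ = -((-1:ℚ)^l * ((l:ℚ)+1)^d) * (((p:ℚ)+1) * (p.choose l : ℚ)) := by rw [hc]
      _ = -((p:ℚ)+1) * ((p.choose l : ℚ) * ((-1:ℚ)^l * ((l:ℚ)+1)^d)) := by ring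
  calc ∑ l ∈ range (p+1), (-1:ℚ)^(l+1) * (((p+1).choose (l+1) : ℕ) : ℚ) * ((l+1 : ℕ) : ℚ)^(d+1)
      = ∑ l ∈ range (p+1), -((p:ℚ)+1) * ((p.choose l : ℚ) * ((-1:ℚ)^l * ((l:ℚ)+1)^d)) :=
        Finset.sum_congr rfl fun l _ => hterm l
    _ = -((p:ℚ)+1) * ∑ l ∈ range (p+1), (p.choose l : ℚ) * ((-1:ℚ)^l * ((l:ℚ)+1)^d) := by
        rw [Finset.mul_sum]
    _ = -((p:ℚ)+1) * ∑ e ∈ range (d+1), (d.choose e : ℚ) * Dsum p e := by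
        congr 1
        have hexp : ∀ l : ℕ, ((l:ℚ)+1)^d = ∑ e ∈ range (d+1), (l:ℚ)^e * (d.choose e : ℚ) := by
          intro l
          have := add_pow (l : ℚ) 1 d
          simpa using this
        calc ∑ l ∈ range (p+1), (p.choose l : ℚ) * ((-1:ℚ)^l * ((l:ℚ)+1)^d)
            = ∑ l ∈ range (p+1), ∑ e ∈ range (d+1),
                (d.choose e : ℚ) * ((-1:ℚ)^l * (p.choose l : ℚ) * (l:ℚ)^e) := by
              refine Finset.sum_congr rfl fun l _ => ?_
              rw [hexp l, Finset.mul_sum, Finset.mul_sum]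
              exact Finset.sum_congr rfl fun e _ => by ring
          _ = ∑ e ∈ range (d+1), (d.choose e : ℚ) * Dsum p e := by
              rw [Finset.sum_comm]
              refine Finset.sum_congr rfl fun e _ => ?_
              rw [Dsum, Finset.mul_sum]

lemma Dsum_eq_zero : ∀ d p : ℕ, d < p → Dsum p d = 0 := by
  intro d
  induction d using Nat.strong_induction_on with
  | _ d ih =>
      intro p hdp
      cases d with
      | zero =>
          have : Dsum p 0 = ∑ l ∈ range (p+1), (-1:ℚ)^l * (p.choose l : ℚ) := by
            rw [Dsum]
            exact Finset.sum_congr rfl fun l _ => by rw [pow_zero, mul_one]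
          rw [this]
          have hint := Int.alternating_sum_range_choose (n := p)
          have : ((∑ i ∈ range (p+1), (-1:ℤ)^i * (p.choose i : ℤ) : ℤ) : ℚ)
              = ((if p = 0 then 1 else 0 : ℤ) : ℚ) := by rw [hint]
          push_cast at this
          rw [this, if_neg (by omega)]
      | succ d' =>
          obtain ⟨p', rfl⟩ : ∃ p', p = p' + 1 := ⟨p - 1, by omega⟩
          rw [Dsum_succ_succ]
          have : ∑ e ∈ range (d'+1), (d'.choose e : ℚ) * Dsum p' e = 0 := by
            refine Finset.sum_eq_zero fun e he => ?_
            rw [ih e (by have := Finset.mem_range.mp he; omega) p'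
              (by have := Finset.mem_range.mp he; omega), mul_zero]
          rw [this, mul_zero]

lemma Dsum_diag : ∀ p : ℕ, Dsum p p = (-1:ℚ)^p * (Nat.factorial p : ℚ) := by
  intro p
  induction p with
  | zero => simp [Dsum]
  | succ q ih =>
      rw [Dsum_succ_succ, Finset.sum_range_succ]
      have hz : ∑ e ∈ range q, (q.choose e : ℚ) * Dsum q e = 0 :=
        Finset.sum_eq_zero fun e he => by
          rw [Dsum_eq_zero e q (Finset.mem_range.mp he), mul_zero]
      rw [hz, zero_add, Nat.choose_self, ih, Nat.factorial_succ]
      push_cast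
      ring

noncomputable def Yser (i : ℕ) : PowerSeries ℚ :=
  PowerSeries.mk fun j => if j = 0 then 0
    else ((j : ℚ) ^ ((j : ℤ) - (i : ℤ))) / (Nat.factorial j : ℚ)

lemma coeff_Cg_Yser {i p : ℕ} (hip : i ≤ p) (hp : 1 ≤ p) :
    PowerSeries.coeff p (Cg (Yser i)) =
      ((-1:ℚ)^p / (Nat.factorial p : ℚ)) * (Dsum p (p - i) - (0:ℚ)^(p-i)) := by
  rw [coeff_Cg, Dsum]
  have key : ∀ l, l ∈ range (p+1) →
      PowerSeries.coeff l (Yser i) * PowerSeries.coeff p (gser ^ l) =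
        ((-1:ℚ)^p / (Nat.factorial p : ℚ)) *
          ((-1:ℚ)^l * (p.choose l : ℚ) * (l:ℚ)^(p-i)) - (if l = 0 then
            ((-1:ℚ)^p / (Nat.factorial p : ℚ)) * ((0:ℚ)^(p-i)) else 0) := by
    intro l hl
    have hlp := Finset.mem_range.mp hl
    rcases Nat.eq_zero_or_pos l with rfl | hl1
    · simp only [Yser, PowerSeries.coeff_mk, if_pos rfl, zero_mul, if_pos rfl]
      rw [Nat.choose_zero_right]
      push_cast
      ring
    · rw [Yser, PowerSeries.coeff_mk, if_neg (by omega), coeff_gser_pow, if_pos (by omega)]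
      rw [if_neg (by omega), sub_zero]
      have hl0 : (l:ℚ) ≠ 0 := Nat.cast_ne_zero.mpr (by omega)
      have hpow : ((l:ℚ) ^ ((l : ℤ) - (i : ℤ))) * (l:ℚ)^(p-l) = (l:ℚ)^(p-i) := by
        have h1 : (l:ℚ)^(p-l) = (l:ℚ) ^ (((p-l : ℕ) : ℤ)) := by
          rw [zpow_natCast]
        rw [h1, ← zpow_add₀ hl0]
        have h2 : (l : ℤ) - (i : ℤ) + ((p-l : ℕ) : ℤ) = ((p - i : ℕ) : ℤ) := by
          push_cast
          omega
        rw [h2, zpow_natCast]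
      have hneg : (-(l:ℚ))^(p-l) = (-1:ℚ)^(p-l) * (l:ℚ)^(p-l) := by
        rw [neg_pow]
      have hsign : (-1:ℚ)^(p-l) = (-1:ℚ)^p * (-1:ℚ)^l := by
        have h3 : (-1:ℚ)^(p-l) * (-1:ℚ)^l = (-1:ℚ)^p := by
          rw [← pow_add, Nat.sub_add_cancel (by omega)]
        have h4 : (-1:ℚ)^l * (-1:ℚ)^l = 1 := by
          rw [← pow_add, ← two_mul, pow_mul]
          norm_num
        calc (-1:ℚ)^(p-l) = (-1:ℚ)^(p-l) * ((-1:ℚ)^l * (-1:ℚ)^l) := by rw [h4, mul_one]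
          _ = (-1:ℚ)^p * (-1:ℚ)^l := by rw [← mul_assoc, h3]
      have hfact : (1:ℚ) / ((Nat.factorial l : ℚ) * (Nat.factorial (p-l) : ℚ))
          = (p.choose l : ℚ) / (Nat.factorial p : ℚ) := by
        rw [Nat.cast_choose ℚ (by omega : l ≤ p)]
        have h5 : (Nat.factorial l : ℚ) ≠ 0 := Nat.cast_ne_zero.mpr (Nat.factorial_ne_zero _)
        have h6 : (Nat.factorial (p-l) : ℚ) ≠ 0 := Nat.cast_ne_zero.mpr (Nat.factorial_ne_zero _)
        have h7 : (Nat.factorial p : ℚ) ≠ 0 := Nat.cast_ne_zero.mpr (Nat.factorial_ne_zero _)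
        field_simp
      have h5 : (Nat.factorial l : ℚ) ≠ 0 := Nat.cast_ne_zero.mpr (Nat.factorial_ne_zero _)
      have h6 : (Nat.factorial (p-l) : ℚ) ≠ 0 := Nat.cast_ne_zero.mpr (Nat.factorial_ne_zero _)
      have h7 : (Nat.factorial p : ℚ) ≠ 0 := Nat.cast_ne_zero.mpr (Nat.factorial_ne_zero _)
      rw [hneg, hsign]
      calc (l:ℚ) ^ ((l : ℤ) - (i : ℤ)) / (Nat.factorial l : ℚ) *
            ((-1:ℚ)^p * (-1:ℚ)^l * (l:ℚ)^(p-l) / (Nat.factorial (p-l) : ℚ))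
          = ((-1:ℚ)^p * (-1:ℚ)^l) * ((l:ℚ) ^ ((l : ℤ) - (i : ℤ)) * (l:ℚ)^(p-l)) *
            ((1:ℚ) / ((Nat.factorial l : ℚ) * (Nat.factorial (p-l) : ℚ))) := by ring
        _ = ((-1:ℚ)^p * (-1:ℚ)^l) * (l:ℚ)^(p-i) * ((p.choose l : ℚ) / (Nat.factorial p : ℚ)) := by
            rw [hpow, hfact]
        _ = (-1:ℚ)^p / (Nat.factorial p : ℚ) * ((-1:ℚ)^l * (p.choose l : ℚ) * (l:ℚ)^(p-i)) := by
            ring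
  rw [Finset.sum_congr rfl key, Finset.sum_sub_distrib, ← Finset.mul_sum, mul_sub]
  congr 1
  rw [Finset.sum_eq_single 0]
  · simp
  · intro k _ hk
    rw [if_neg hk]
  · intro h
    exact absurd (Finset.mem_range.mpr (by omega)) h

lemma Cg_Yser_one : Cg (Yser 1) = PowerSeries.X := by
  ext p
  rcases Nat.eq_zero_or_pos p with rfl | hp
  · rw [coeff_Cg]
    simp [Yser, PowerSeries.coeff_mk]
  · rw [coeff_Cg_Yser hp hp, PowerSeries.coeff_X]
    rcases eq_or_lt_of_le (Nat.succ_le_of_lt hp) with h1 | h2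
    · rw [← h1]
      norm_num [Dsum, Finset.sum_range_succ]
    · rw [if_neg (by omega), Dsum_eq_zero (p-1) p (by omega)]
      rw [zero_pow (by omega : p - 1 ≠ 0)]
      ring

lemma coeff_Cg_Yser_eq_zero {a p : ℕ} (ha : 1 ≤ a) (hp : a < p) :
    PowerSeries.coeff p (Cg (Yser a)) = 0 := by
  rw [coeff_Cg_Yser (le_of_lt hp) (by omega), Dsum_eq_zero (p-a) p (by omega),
    zero_pow (by omega : p - a ≠ 0)]
  ring

lemma coeff_Cg_Yser_zero {p : ℕ} (hp : 1 ≤ p) :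
    PowerSeries.coeff p (Cg (Yser 0)) = 1 := by
  rw [coeff_Cg_Yser (by omega) hp, Nat.sub_zero, Dsum_diag, zero_pow (by omega : p ≠ 0)]
  have h7 : (Nat.factorial p : ℚ) ≠ 0 := Nat.cast_ne_zero.mpr (Nat.factorial_ne_zero _)
  field_simp
  rw [sub_zero, ← mul_assoc, ← pow_add, ← two_mul, pow_mul]
  norm_num

lemma coeff_one_sub_X_mul_Cg_Yser {a p : ℕ} (hp : 1 + a < p) :
    PowerSeries.coeff p ((1 - PowerSeries.X) * Cg (Yser a)) = 0 := by
  rw [coeff_one_sub_X_mul, if_neg (by omega)]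
  rcases Nat.eq_zero_or_pos a with rfl | ha
  · rw [coeff_Cg_Yser_zero (by omega), coeff_Cg_Yser_zero (by omega), sub_self]
  · rw [coeff_Cg_Yser_eq_zero ha (by omega), coeff_Cg_Yser_eq_zero ha (by omega), sub_self]

lemma coeff_X_pow_mul_ge (W : PowerSeries ℚ) {k n : ℕ} (h : k ≤ n) :
    PowerSeries.coeff n (PowerSeries.X ^ k * W) = PowerSeries.coeff (n - k) W := by
  obtain ⟨c, rfl⟩ := Nat.exists_eq_add_of_le h
  rw [show k + c - k = c from by omega, show k + c = c + k from add_comm k c,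
    PowerSeries.coeff_X_pow_mul]

lemma coeff_mul_bound {A B : PowerSeries ℚ} {a b : ℕ}
    (hA : ∀ u, a < u → PowerSeries.coeff u A = 0)
    (hB : ∀ v, b < v → PowerSeries.coeff v B = 0) :
    ∀ w, a + b < w → PowerSeries.coeff w (A * B) = 0 := by
  intro w hw
  rw [PowerSeries.coeff_mul]
  refine Finset.sum_eq_zero fun x hx => ?_
  have hx' := Finset.HasAntidiagonal.mem_antidiagonal.mp hx
  rcases lt_or_ge a x.1 with h | h
  · rw [hA x.1 h, zero_mul]
  · rw [hB x.2 (by omega), mul_zero]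

lemma coeff_prod_bound {ι : Type*} (s : Finset ι) (f : ι → PowerSeries ℚ) (d : ι → ℕ)
    (h : ∀ i ∈ s, ∀ u, d i < u → PowerSeries.coeff u (f i) = 0) :
    ∀ w, (∑ i ∈ s, d i) < w → PowerSeries.coeff w (∏ i ∈ s, f i) = 0 := by
  classical
  induction s using Finset.cons_induction with
  | empty =>
      intro w hw
      simp only [Finset.prod_empty, PowerSeries.coeff_one]
      rw [if_neg (by simpa using hw.ne')]
  | cons a s ha ih =>
      intro w hw
      rw [Finset.prod_cons]
      refine coeff_mul_bound (a := d a) (b := ∑ i ∈ s, d i)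
        (fun u hu => h a (Finset.mem_cons_self a s) u hu)
        (fun v hv => ih (fun i hi => h i (Finset.mem_cons_of_mem hi)) v hv) w ?_
      rw [Finset.sum_cons] at hw
      omega

theorem scalarMain (m' : ℕ) (α : Fin (m' + 1) → ℕ)
    (hα : ∀ i : Fin m', 1 ≤ α i.succ) (n : ℕ) (hn : 1 + ∑ i, α i < n) :
    ∑ k ∈ range (n + 1), ((-1:ℚ)^k * (n:ℚ)^k / (Nat.factorial k : ℚ)) *
      PowerSeries.coeff n ((Yser 1)^k * ∏ i, Yser (α i)) = 0 := by
  set P : PowerSeries ℚ := ∏ i, Cg (Yser (α i)) with hP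
  set P' : PowerSeries ℚ := (1 - PowerSeries.X) * P with hP'
  -- bound on P'
  have hP'bound : ∀ w, 1 + (∑ i, α i) < w → PowerSeries.coeff w P' = 0 := by
    have hsplit : P' = ((1 - PowerSeries.X) * Cg (Yser (α 0))) *
        ∏ i : Fin m', Cg (Yser (α i.succ)) := by
      rw [hP', hP, Fin.prod_univ_succ, ← mul_assoc]
    intro w hw
    rw [hsplit]
    refine coeff_mul_bound (a := 1 + α 0) (b := ∑ i : Fin m', α i.succ)
      (fun u hu => coeff_one_sub_X_mul_Cg_Yser hu)
      (fun v hv => coeff_prod_bound Finset.univ _ (fun i => α i.succ)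
        (fun i _ u hu => coeff_Cg_Yser_eq_zero (hα i) hu) v hv) w ?_
    rw [Fin.sum_univ_succ] at hw
    omega
  -- each term
  have hterm : ∀ k, PowerSeries.coeff n ((Yser 1)^k * ∏ i, Yser (α i)) =
      PowerSeries.coeff n (PowerSeries.X ^ k * (P' * Eexp n)) := by
    intro k
    rw [mainL ((Yser 1)^k * ∏ i, Yser (α i)) n]
    congr 1
    rw [Cg_mul, Cg_pow, Cg_prod, Cg_Yser_one, ← hP]
    rw [hP']
    ring
  simp_rw [hterm]
  -- identify the sum with a coefficient of Eexp (-n) * (P' * Eexp n)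
  have hsum : ∑ k ∈ range (n + 1), ((-1:ℚ)^k * (n:ℚ)^k / (Nat.factorial k : ℚ)) *
      PowerSeries.coeff n (PowerSeries.X ^ k * (P' * Eexp n)) =
      PowerSeries.coeff n (Eexp (-(n:ℚ)) * (P' * Eexp n)) := by
    rw [PowerSeries.coeff_mul, Finset.Nat.sum_antidiagonal_eq_sum_range_succ_mk]
    refine Finset.sum_congr rfl fun k hk => ?_
    have hk' := Finset.mem_range.mp hk
    congr 1
    · rw [coeff_Eexp, neg_pow]
      ring
    · rw [coeff_X_pow_mul_ge _ (by omega : k ≤ n)]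
  rw [hsum]
  have : Eexp (-(n:ℚ)) * (P' * Eexp n) = P' := by
    calc Eexp (-(n:ℚ)) * (P' * Eexp n) = P' * (Eexp (-(n:ℚ)) * Eexp n) := by ring
      _ = P' * Eexp 0 := by rw [Eexp_mul_Eexp]; ring_nf
      _ = P' := by rw [Eexp_zero, mul_one]
  rw [this]
  exact hP'bound n hn

-- bracket linearity
lemma bracket_sum_subset {f : MvPolynomial ℕ ℚ} {S : Finset (ℕ →₀ ℕ)} (h : f.support ⊆ S) :
    bracket f = ∑ m ∈ S, f.coeff m * brval m := by
  rw [bracket]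
  refine Finset.sum_subset h fun d _ hd => ?_
  rw [MvPolynomial.notMem_support_iff.mp hd, zero_mul]

lemma bracket_add (f g : MvPolynomial ℕ ℚ) : bracket (f + g) = bracket f + bracket g := by
  classical
  have hf : f.support ⊆ f.support ∪ g.support ∪ (f+g).support := by
    intro x hx; exact Finset.mem_union_left _ (Finset.mem_union_left _ hx)
  have hg : g.support ⊆ f.support ∪ g.support ∪ (f+g).support := by
    intro x hx; exact Finset.mem_union_left _ (Finset.mem_union_right _ hx)
  have hfg : (f+g).support ⊆ f.support ∪ g.support ∪ (f+g).support := fun x hx =>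
    Finset.mem_union_right _ hx
  rw [bracket_sum_subset hf, bracket_sum_subset hg, bracket_sum_subset hfg,
    ← Finset.sum_add_distrib]
  refine Finset.sum_congr rfl fun d _ => ?_
  rw [MvPolynomial.coeff_add]
  ring

lemma bracket_zero : bracket 0 = 0 := by
  simp [bracket]

lemma bracket_C_mul (c : ℚ) (f : MvPolynomial ℕ ℚ) :
    bracket (MvPolynomial.C c * f) = c * bracket f := by
  classical
  have hs : (MvPolynomial.C c * f).support ⊆ f.support := by
    intro d hd
    rw [MvPolynomial.mem_support_iff, MvPolynomial.coeff_C_mul] at hd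
    rw [MvPolynomial.mem_support_iff]
    intro h0
    exact hd (by rw [h0, mul_zero])
  rw [bracket_sum_subset hs, bracket, Finset.mul_sum]
  refine Finset.sum_congr rfl fun d _ => ?_
  rw [MvPolynomial.coeff_C_mul]
  ring

lemma bracket_finsum {ι : Type*} (s : Finset ι) (F : ι → MvPolynomial ℕ ℚ) :
    bracket (∑ i ∈ s, F i) = ∑ i ∈ s, bracket (F i) := by
  classical
  induction s using Finset.cons_induction with
  | empty => simpa using bracket_zero
  | cons a s ha ih => rw [Finset.sum_cons, Finset.sum_cons, bracket_add, ih]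

-- homogeneity
lemma Zser_whom (i p : ℕ) :
    MvPolynomial.IsWeightedHomogeneous (id : ℕ → ℕ) (PowerSeries.coeff p (Zser i)) p := by
  rw [Zser, PowerSeries.coeff_mk]
  split_ifs with h
  · subst h
    exact MvPolynomial.isWeightedHomogeneous_zero ℚ _ _
  · have := (MvPolynomial.isWeightedHomogeneous_C (id : ℕ → ℕ)
      (((p : ℚ) ^ ((p : ℤ) - (i : ℤ))) / (Nat.factorial p : ℚ))).mul
      (MvPolynomial.isWeightedHomogeneous_X ℚ (id : ℕ → ℕ) p)
    simpa using this

lemma Zser_hdeg (i p : ℕ) (hp : p ≠ 0) :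
    MvPolynomial.IsWeightedHomogeneous (fun _ => (1:ℕ)) (PowerSeries.coeff p (Zser i)) 1 := by
  rw [Zser, PowerSeries.coeff_mk, if_neg hp]
  have := (MvPolynomial.isWeightedHomogeneous_C (fun _ => (1:ℕ))
    (((p : ℚ) ^ ((p : ℤ) - (i : ℤ))) / (Nat.factorial p : ℚ))).mul
    (MvPolynomial.isWeightedHomogeneous_X ℚ (fun _ => (1:ℕ)) p)
  simpa using this

lemma prodZ_whom {ι : Type*} (s : Finset ι) (β : ι → ℕ) (p : ℕ) :
    MvPolynomial.IsWeightedHomogeneous (id : ℕ → ℕ)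
      (PowerSeries.coeff p (∏ i ∈ s, Zser (β i))) p := by
  classical
  induction s using Finset.cons_induction generalizing p with
  | empty =>
      simp only [Finset.prod_empty, PowerSeries.coeff_one]
      split_ifs with h
      · subst h; exact MvPolynomial.isWeightedHomogeneous_one ℚ _
      · exact MvPolynomial.isWeightedHomogeneous_zero ℚ _ _
  | cons a s ha ih =>
      rw [Finset.prod_cons, PowerSeries.coeff_mul]
      refine MvPolynomial.IsWeightedHomogeneous.sum _ _ _ fun x hx => ?_
      have hx' := Finset.HasAntidiagonal.mem_antidiagonal.mp hx
      have := (Zser_whom (β a) x.1).mul (ih x.2)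
      rwa [hx'] at this

lemma prodZ_hdeg {ι : Type*} (s : Finset ι) (β : ι → ℕ) (p : ℕ) :
    MvPolynomial.IsWeightedHomogeneous (fun _ => (1:ℕ))
      (PowerSeries.coeff p (∏ i ∈ s, Zser (β i))) s.card := by
  classical
  induction s using Finset.cons_induction generalizing p with
  | empty =>
      simp only [Finset.prod_empty, PowerSeries.coeff_one, Finset.card_empty]
      split_ifs with h
      · exact MvPolynomial.isWeightedHomogeneous_one ℚ _
      · exact MvPolynomial.isWeightedHomogeneous_zero ℚ _ _
  | cons a s ha ih =>
      rw [Finset.prod_cons, PowerSeries.coeff_mul, Finset.card_cons]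
      refine MvPolynomial.IsWeightedHomogeneous.sum _ _ _ fun x hx => ?_
      rcases Nat.eq_zero_or_pos x.1 with h0 | h1
      · have hz : PowerSeries.coeff x.1 (Zser (β a)) = (0 : MvPolynomial ℕ ℚ) := by
          rw [h0, Zser, PowerSeries.coeff_mk, if_pos rfl]
        rw [hz, zero_mul]
        exact MvPolynomial.isWeightedHomogeneous_zero ℚ _ _
      · have := (Zser_hdeg (β a) x.1 (by omega)).mul (ih x.2)
        rwa [add_comm 1 s.card] at this

lemma bracket_of_homog {f : MvPolynomial ℕ ℚ} {n D : ℕ} (hn : n ≠ 0)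
    (h1 : MvPolynomial.IsWeightedHomogeneous (id : ℕ → ℕ) f n)
    (h2 : MvPolynomial.IsWeightedHomogeneous (fun _ => (1:ℕ)) f D) :
    bracket f = (n : ℚ) ^ ((D : ℤ) - 3) * MvPolynomial.eval (fun _ => (1:ℚ)) f := by
  rw [bracket, MvPolynomial.eval_eq, Finset.mul_sum]
  refine Finset.sum_congr rfl fun d hd => ?_
  have hc : f.coeff d ≠ 0 := MvPolynomial.mem_support_iff.mp hd
  have hw := h1 hc
  have hdg := h2 hc
  have hd0 : d ≠ 0 := by
    intro h0
    apply hn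
    rw [← hw, h0, map_zero]
  have hwv : (d.sum fun j e => j * e : ℕ) = n := by
    rw [← hw, Finsupp.weight_apply]
    refine Finsupp.sum_congr fun j _ => ?_
    simp [mul_comm]
  have hdv : (d.sum fun _ e => e : ℕ) = D := by
    rw [← hdg, Finsupp.weight_apply]
    refine Finsupp.sum_congr fun j _ => ?_
    simp
  rw [brval, if_neg hd0, hwv, hdv]
  have hone : ∏ i ∈ d.support, (1:ℚ) ^ d i = 1 := by simp
  rw [hone, mul_one]
  ring

lemma constantCoeff_Zser (i : ℕ) : PowerSeries.constantCoeff (Zser i) = 0 := by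
  rw [← PowerSeries.coeff_zero_eq_constantCoeff, Zser, PowerSeries.coeff_mk, if_pos rfl]

lemma coeff_Zser_pow_eq_zero {i p k : ℕ} (h : p < k) :
    PowerSeries.coeff p ((Zser i) ^ k) = 0 := by
  have hdvd : (PowerSeries.X : PowerSeries (MvPolynomial ℕ ℚ)) ^ k ∣ (Zser i) ^ k :=
    pow_dvd_pow_of_dvd (PowerSeries.X_dvd_iff.mpr (constantCoeff_Zser i)) k
  exact PowerSeries.X_pow_dvd_iff.mp hdvd p h

lemma coeff_expNeg_mul (P : PowerSeries (MvPolynomial ℕ ℚ)) (n : ℕ) :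
    PowerSeries.coeff n (expNeg (Zser 1) * P) =
      ∑ k ∈ Finset.range (n+1), MvPolynomial.C ((-1 : ℚ) ^ k / (Nat.factorial k : ℚ)) *
        PowerSeries.coeff n ((Zser 1) ^ k * P) := by
  rw [PowerSeries.coeff_mul]
  have hstep : ∀ x : ℕ × ℕ, x ∈ Finset.HasAntidiagonal.antidiagonal n →
      PowerSeries.coeff x.1 (expNeg (Zser 1)) * PowerSeries.coeff x.2 P =
      ∑ k ∈ Finset.range (n+1), MvPolynomial.C ((-1 : ℚ) ^ k / (Nat.factorial k : ℚ)) *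
        PowerSeries.coeff x.1 ((Zser 1) ^ k) * PowerSeries.coeff x.2 P := by
    intro x hx
    have hx' := Finset.HasAntidiagonal.mem_antidiagonal.mp hx
    rw [expNeg, PowerSeries.coeff_mk, Finset.sum_mul]
    refine Finset.sum_subset (Finset.range_subset_range.mpr (show x.1 + 1 ≤ n + 1 by omega)) fun k hk1 hk => ?_
    have hzero : PowerSeries.coeff x.1 ((Zser 1)^k) = (0 : MvPolynomial ℕ ℚ) :=
      coeff_Zser_pow_eq_zero (i := 1) (p := x.1) (k := k) (by simp only [Finset.mem_range] at hk; omega)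
    rw [hzero, mul_zero, zero_mul]
  rw [Finset.sum_congr rfl hstep, Finset.sum_comm]
  refine Finset.sum_congr rfl fun k _ => ?_
  rw [PowerSeries.coeff_mul, Finset.mul_sum]
  exact Finset.sum_congr rfl fun x _ => by ring

/-- Lemma 2 of the paper: for a nonempty sequence `α = (α₁,…,α_m)` of nonnegative
integers with `α_i > 0` for `i > 1`, the series
`F_{α₁,…,α_m} = ⟨exp(-Z₁)·Z_{α₁}⋯Z_{α_m}⟩` is a polynomial in `x` of degree at most
`1 + ∑ α_i`. -/
theorem stmt_3 (m : ℕ) (hm : 0 < m) (α : Fin m → ℕ)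
    (hα : ∀ i : Fin m, 0 < (i : ℕ) → 0 < α i) :
    ∀ n : ℕ, 1 + ∑ i, α i < n →
      PowerSeries.coeff n (bracketSeries (expNeg (Zser 1) * ∏ i, Zser (α i))) = 0 := by
  obtain ⟨m', rfl⟩ : ∃ m', m = m' + 1 := ⟨m - 1, by omega⟩
  intro n hn
  have hn2 : 2 ≤ n := by omega
  have hn0 : (n : ℚ) ≠ 0 := Nat.cast_ne_zero.mpr (by omega)
  have hmap : ∀ (i : ℕ),
      PowerSeries.map (MvPolynomial.eval (fun _ => (1:ℚ)) : MvPolynomial ℕ ℚ →+* ℚ) (Zser i)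
        = Yser i := by
    intro i
    ext j
    rw [PowerSeries.coeff_map, Zser, Yser, PowerSeries.coeff_mk, PowerSeries.coeff_mk]
    split_ifs with h
    · simp
    · simp
  rw [bracketSeries, PowerSeries.coeff_mk, coeff_expNeg_mul, bracket_finsum]
  have hterm : ∀ k ∈ Finset.range (n+1),
      bracket (MvPolynomial.C ((-1:ℚ)^k / (Nat.factorial k : ℚ)) *
        PowerSeries.coeff n ((Zser 1)^k * ∏ i, Zser (α i)))
      = ((n:ℚ) ^ (((m'+1 : ℕ):ℤ) - 3)) * (((-1:ℚ)^k * (n:ℚ)^k / (Nat.factorial k : ℚ)) *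
        PowerSeries.coeff n ((Yser 1)^k * ∏ i, Yser (α i))) := by
    intro k _
    rw [bracket_C_mul]
    set β : Fin k ⊕ Fin (m'+1) → ℕ := Sum.elim (fun _ => (1:ℕ)) α with hβ
    have hprodeq : (Zser 1)^k * ∏ i, Zser (α i) = ∏ j, Zser (β j) := by
      rw [Fintype.prod_sum_type]
      congr 1
      · simp [hβ, Finset.prod_const]
    have h1 := prodZ_whom (Finset.univ : Finset (Fin k ⊕ Fin (m'+1))) β n
    have h2 := prodZ_hdeg (Finset.univ : Finset (Fin k ⊕ Fin (m'+1))) β n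
    have hcard : (Finset.univ : Finset (Fin k ⊕ Fin (m'+1))).card = k + (m'+1) := by
      simp
    rw [hcard] at h2
    rw [hprodeq, bracket_of_homog (by omega) h1 h2]
    have heval : MvPolynomial.eval (fun _ => (1:ℚ)) (PowerSeries.coeff n (∏ j, Zser (β j)))
        = PowerSeries.coeff n ((Yser 1)^k * ∏ i, Yser (α i)) := by
      rw [← PowerSeries.coeff_map, ← hprodeq, map_mul, map_pow, map_prod]
      simp_rw [hmap]
    rw [heval]
    have hz : (n:ℚ) ^ (((k + (m'+1) : ℕ):ℤ) - 3)
        = (n:ℚ)^k * (n:ℚ)^((((m'+1:ℕ)):ℤ) - 3) := by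
      rw [show ((k + (m'+1) : ℕ):ℤ) - 3 = (k:ℤ) + ((((m'+1:ℕ)):ℤ) - 3) by push_cast; ring,
        zpow_add₀ hn0, zpow_natCast]
    rw [hz]
    ring
  rw [Finset.sum_congr rfl hterm, ← Finset.mul_sum]
  have hα' : ∀ i : Fin m', 1 ≤ α i.succ := by
    intro i
    exact hα i.succ (by simp [Fin.val_succ])
  rw [scalarMain m' α hα' n hn, mul_zero]
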